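/- Let U, Ũ ∈ ℝ^{p×K}, let m ≤ p, and suppose ‖U_{i·}‖₂² ≥ K/(μm) for all i ≤ m and U_{i·} = 0 for i > m, for some μ ≥ 1. Let q be the number of indices i ≤ m whose row norm ‖Ũ_{i·}‖₂ is not among the m largest row norms of Ũ. If ‖Ũ − U‖_F² ≤ ε, then q ≤ 16μm·ε/K. -/

import Mathlib

open Matrix

/-- Euclidean norm of the `i`-th row of a matrix. -/
noncomputable def rowNorm {p K : ℕ} (M : Matrix (Fin p) (Fin K) ℝ) (i : Fin p) : ℝ :=
  Real.sqrt (∑ j, M i j ^ 2)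

/-- Frobenius norm of a matrix. -/
noncomputable def frobNorm {p K : ℕ} (M : Matrix (Fin p) (Fin K) ℝ) : ℝ :=
  Real.sqrt (∑ i, ∑ j, M i j ^ 2)

lemma rowNorm_nonneg' {p K : ℕ} (M : Matrix (Fin p) (Fin K) ℝ) (i : Fin p) : 0 ≤ rowNorm M i :=
  Real.sqrt_nonneg _

lemma rowNorm_tri' {p K : ℕ} (A B : Matrix (Fin p) (Fin K) ℝ) (i : Fin p) :
    rowNorm B i ≤ rowNorm A i + rowNorm (A - B) i := by
  have key : ∀ M : Matrix (Fin p) (Fin K) ℝ,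
      rowNorm M i = ‖(WithLp.equiv 2 (Fin K → ℝ)).symm (M i)‖ := by
    intro M
    rw [EuclideanSpace.norm_eq]
    simp [rowNorm, sq_abs]
  rw [key, key, key]
  set x := (WithLp.equiv 2 (Fin K → ℝ)).symm (A i)
  set y := (WithLp.equiv 2 (Fin K → ℝ)).symm (B i)
  have h : (WithLp.equiv 2 (Fin K → ℝ)).symm ((A - B) i) = x - y := rfl
  rw [h]
  calc ‖y‖ = ‖x - (x - y)‖ := by rw [sub_sub_cancel]
    _ ≤ ‖x‖ + ‖x - y‖ := norm_sub_le _ _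

lemma frob_sq' {p K : ℕ} (M : Matrix (Fin p) (Fin K) ℝ) :
    frobNorm M ^ 2 = ∑ i, rowNorm M i ^ 2 := by
  unfold frobNorm rowNorm
  rw [Real.sq_sqrt (by positivity)]
  exact Finset.sum_congr rfl fun i _ => (Real.sq_sqrt (by positivity)).symm


theorem stmt18 (p K m : ℕ) (hK0 : 0 < K) (hKm : K ≤ m) (hmp : m ≤ p)
    (μ : ℝ) (hμ : 1 ≤ μ)
    (U Ut : Matrix (Fin p) (Fin K) ℝ)
    (hlow : ∀ i : Fin p, i.val < m → (K : ℝ) / (μ * m) ≤ rowNorm U i ^ 2)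
    (hzero : ∀ i : Fin p, m ≤ i.val → ∀ j : Fin K, U i j = 0)
    (ε : ℝ) (hε : frobNorm (Ut - U) ^ 2 ≤ ε) :
    ((Finset.univ.filter fun i : Fin p => i.val < m ∧
        m ≤ (Finset.univ.filter fun j : Fin p =>
          rowNorm Ut i < rowNorm Ut j).card).card : ℝ)
      ≤ 16 * μ * m * ε / K := by
  have hm0 : 0 < m := lt_of_lt_of_le hK0 hKm
  have hKR : (0:ℝ) < K := by exact_mod_cast hK0
  have hmR : (0:ℝ) < m := by exact_mod_cast hm0
  have hμ0 : (0:ℝ) < μ := lt_of_lt_of_le one_pos hμ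
  have hKμm : (0:ℝ) < (K:ℝ)/(μ*m) := div_pos hKR (mul_pos hμ0 hmR)
  set δ : ℝ := Real.sqrt ((K:ℝ)/(μ*m)) / 4 with hδdef
  have hδ : 0 < δ := by
    have := Real.sqrt_pos.mpr hKμm
    positivity
  have hδsq : δ ^ 2 = (K:ℝ)/(μ*m)/16 := by
    rw [hδdef, div_pow, Real.sq_sqrt hKμm.le]; norm_num
  set S : Finset (Fin p) := Finset.univ.filter fun i : Fin p => i.val < m ∧
        m ≤ (Finset.univ.filter fun j : Fin p =>
          rowNorm Ut i < rowNorm Ut j).card with hSdef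
  set C : Finset (Fin p) := Finset.univ.filter
      (fun j : Fin p => (Finset.univ.filter fun k : Fin p =>
          rowNorm Ut j < rowNorm Ut k).card < m) with hCdef
  -- C has at least m elements
  have hCcard : m ≤ C.card := by
    by_contra h
    push_neg at h
    have hne : Cᶜ.Nonempty := by
      rw [← Finset.card_pos, Finset.card_compl]
      simp only [Fintype.card_fin]
      omega
    obtain ⟨a, ha, hmax⟩ := Finset.exists_max_image Cᶜ (fun j => rowNorm Ut j) hne
    have ha' : m ≤ (Finset.univ.filter fun k : Fin p =>
        rowNorm Ut a < rowNorm Ut k).card := by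
      have h1 := Finset.mem_compl.mp ha
      rw [hCdef, Finset.mem_filter] at h1
      push_neg at h1
      exact h1 (Finset.mem_univ a)
    have hsub : (Finset.univ.filter fun k : Fin p => rowNorm Ut a < rowNorm Ut k) ⊆ C := by
      intro k hk
      by_contra hkC
      have h1 := hmax k (Finset.mem_compl.mpr hkC)
      have h2 : rowNorm Ut a < rowNorm Ut k := (Finset.mem_filter.mp hk).2
      linarith
    have h3 := Finset.card_le_card hsub
    omega
  -- each element of C has norm at least any element of S
  have hSC : ∀ i ∈ S, ∀ c ∈ C, rowNorm Ut i ≤ rowNorm Ut c := by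
    intro i hi c hc
    by_contra h
    push_neg at h
    rw [hSdef, Finset.mem_filter] at hi
    rw [hCdef, Finset.mem_filter] at hc
    have hi' := hi.2.2
    have hc' := hc.2
    have hsub : (Finset.univ.filter fun k : Fin p => rowNorm Ut i < rowNorm Ut k)
        ⊆ (Finset.univ.filter fun k : Fin p => rowNorm Ut c < rowNorm Ut k) := by
      intro k hk
      rw [Finset.mem_filter] at hk ⊢
      exact ⟨hk.1, lt_trans h hk.2⟩
    have h3 := Finset.card_le_card hsub
    omega
  have hSCdisj : ∀ i ∈ S, i ∉ C := by
    intro i hi hiC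
    rw [hSdef, Finset.mem_filter] at hi
    rw [hCdef, Finset.mem_filter] at hiC
    omega
  set F : Finset (Fin p) := Finset.univ.filter (fun i : Fin p => i.val < m) with hFdef
  have hFcard : F.card = m := by
    have he : F = Finset.map (Fin.castLEEmb hmp) Finset.univ := by
      ext i
      simp only [hFdef, Finset.mem_filter, Finset.mem_univ, true_and, Finset.mem_map,
        Fin.castLEEmb, Function.Embedding.coeFn_mk]
      constructor
      · intro hi; exact ⟨⟨i.val, hi⟩, rfl⟩
      · rintro ⟨j, -, rfl⟩; simpa using j.2
    rw [he, Finset.card_map, Finset.card_univ, Fintype.card_fin]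
  have hSF : S ⊆ F := by
    intro i hi
    rw [hSdef, Finset.mem_filter] at hi
    rw [hFdef, Finset.mem_filter]
    exact ⟨Finset.mem_univ i, hi.2.1⟩
  set S₁ : Finset (Fin p) := S.filter (fun i => δ ≤ rowNorm (Ut - U) i) with hS₁def
  set S₂ : Finset (Fin p) := S.filter (fun i => ¬ δ ≤ rowNorm (Ut - U) i) with hS₂def
  have hScard : S₁.card + S₂.card = S.card :=
    Finset.card_filter_add_card_filter_not _
  set C' : Finset (Fin p) := C \ F with hC'def
  have hC'card : S₂.card ≤ C'.card := by
    have h1 : C ∩ F ⊆ F \ S₂ := by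
      intro x hx
      rw [Finset.mem_sdiff]
      refine ⟨(Finset.mem_inter.mp hx).2, fun hxS₂ => ?_⟩
      exact hSCdisj x (Finset.mem_of_mem_filter x hxS₂) (Finset.mem_inter.mp hx).1
    have hS₂F : S₂ ⊆ F := fun x hx => hSF (Finset.mem_of_mem_filter x hx)
    have h2 : (F \ S₂).card = m - S₂.card := by rw [Finset.card_sdiff_of_subset hS₂F, hFcard]
    have h3 := Finset.card_le_card h1
    have h4 : (C ∩ F).card + C'.card = C.card := by
      rw [hC'def]; exact Finset.card_inter_add_card_sdiff C F
    have h5 : S₂.card ≤ m := by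
      have := Finset.card_le_card hS₂F
      omega
    omega
  have hU4δ : ∀ i : Fin p, i.val < m → 4*δ ≤ rowNorm U i := by
    intro i hi
    have h1 : 4*δ = Real.sqrt ((K:ℝ)/(μ*m)) := by rw [hδdef]; ring
    rw [h1]
    calc Real.sqrt ((K:ℝ)/(μ*m)) ≤ Real.sqrt (rowNorm U i ^ 2) :=
          Real.sqrt_le_sqrt (hlow i hi)
      _ = rowNorm U i := Real.sqrt_sq (rowNorm_nonneg' U i)
  -- key: a sum bound applicable to any set of rows with deviation ≥ δ
  have hkey : ∀ T : Finset (Fin p), (∀ i ∈ T, δ ≤ rowNorm (Ut - U) i) →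
      (T.card : ℝ) * δ ^ 2 ≤ ε := by
    intro T hDT
    calc (T.card : ℝ) * δ ^ 2 = ∑ _i ∈ T, δ ^ 2 := by rw [Finset.sum_const, nsmul_eq_mul]
      _ ≤ ∑ i ∈ T, rowNorm (Ut - U) i ^ 2 := Finset.sum_le_sum (fun i hi =>
          pow_le_pow_left₀ hδ.le (hDT i hi) 2)
      _ ≤ ∑ i, rowNorm (Ut - U) i ^ 2 := Finset.sum_le_sum_of_subset_of_nonneg
          (Finset.subset_univ T) (fun i _ _ => sq_nonneg _)
      _ = frobNorm (Ut - U) ^ 2 := (frob_sq' _).symm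
      _ ≤ ε := hε
  have hqle : (S.card : ℝ) * δ ^ 2 ≤ ε := by
    rcases Finset.eq_empty_or_nonempty S₂ with hemp | ⟨i₀, hi₀⟩
    · -- S₂ empty: S.card = S₁.card
      have h0 : S₂.card = 0 := by rw [hemp]; exact Finset.card_empty
      have h1 : S.card = S₁.card := by omega
      rw [h1]
      exact hkey S₁ (fun i hi => (Finset.mem_filter.mp hi).2)
    · -- S₂ nonempty
      have hi₀S : i₀ ∈ S := Finset.mem_of_mem_filter i₀ hi₀
      have hi₀m : i₀.val < m := by
        have := hSF hi₀S
        rw [hFdef, Finset.mem_filter] at this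
        exact this.2
      have hi₀D : rowNorm (Ut - U) i₀ < δ := by
        have h1 := (Finset.mem_filter.mp hi₀).2
        push_neg at h1; exact h1
      have hNi₀ : 3*δ < rowNorm Ut i₀ := by
        have htri := rowNorm_tri' Ut U i₀
        have h4δ := hU4δ i₀ hi₀m
        linarith
      have hDC' : ∀ j ∈ C', δ ≤ rowNorm (Ut - U) j := by
        intro j hj
        have hjC : j ∈ C := (Finset.mem_sdiff.mp hj).1
        have hjm : m ≤ j.val := by
          have h1 := (Finset.mem_sdiff.mp hj).2
          rw [hFdef, Finset.mem_filter] at h1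
          push_neg at h1
          exact h1 (Finset.mem_univ j)
        have hDN : rowNorm (Ut - U) j = rowNorm Ut j := by
          unfold rowNorm
          congr 1
          apply Finset.sum_congr rfl
          intro k _
          rw [Matrix.sub_apply, hzero j hjm k, sub_zero]
        have h2 := hSC i₀ hi₀S j hjC
        rw [hDN]
        linarith
      have hdisj : Disjoint S₁ C' := by
        rw [Finset.disjoint_left]
        intro x hx hx'
        exact (Finset.mem_sdiff.mp hx').2 (hSF (Finset.mem_of_mem_filter x hx))
      have hTcard : (S₁ ∪ C').card = S₁.card + C'.card :=
        Finset.card_union_of_disjoint hdisj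
      have hT := hkey (S₁ ∪ C') (by
        intro i hi
        rcases Finset.mem_union.mp hi with h | h
        · exact (Finset.mem_filter.mp h).2
        · exact hDC' i h)
      have hle : S.card ≤ (S₁ ∪ C').card := by omega
      have hleR : (S.card : ℝ) ≤ ((S₁ ∪ C').card : ℝ) := by exact_mod_cast hle
      nlinarith [sq_nonneg δ]
  -- final algebra
  rw [le_div_iff₀ hKR]
  rw [hδsq] at hqle
  have h16 : (S.card : ℝ) * ((K:ℝ)/(μ*m)/16) * (16 * μ * m) ≤ ε * (16 * μ * m) :=
    mul_le_mul_of_nonneg_right hqle (by positivity)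
  have heq : (S.card : ℝ) * ((K:ℝ)/(μ*m)/16) * (16 * μ * m) = (S.card : ℝ) * K := by
    field_simp
  nlinarith [h16, heq]
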